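/- Let a, b, c, d be nonnegative integers and let p be an integer. If p ≤ max(−d, −⌊(b+1)/2⌋) or p ≥ min(a+d, a+⌊(c+1)/2⌋), then E(a,b,c,d,p) = M(a,b,c), where M(a,b,c) is MacMahon's product. (Intrusions positioned 'too far away' from the hexagon do not change the number of lozenge tilings.) -/

import Mathlib

open Finset

noncomputable section

/-- Binomial coefficient with integer arguments, equal to `0` whenever `k < 0` or `k > n`. -/
def ibinom (n k : ℤ) : ℚ :=
  if 0 ≤ k ∧ k ≤ n then (n.toNat.choose k.toNat : ℚ) else 0

/-- The Pochhammer symbol (rising factorial) `x (x+1) ⋯ (x+n-1)`. -/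
def poch (x : ℚ) (n : ℕ) : ℚ := (ascPochhammer ℚ n).eval x

/-- MacMahon's product `M(a,b,c)`. -/
def macmahon (a b c : ℕ) : ℚ :=
  ∏ i ∈ Finset.range a,
    ((Nat.factorial i : ℚ) * (Nat.factorial (b + c + i) : ℚ)) /
      ((Nat.factorial (b + i) : ℚ) * (Nat.factorial (c + i) : ℚ))

/-- The matrix `Q(a,b,c,d,p)` (with `1`-based indices `i, j ∈ {1, …, a+d}`):
rows/columns with index `≤ a` are lateral, the rest are intrusive. -/
def Qmat (a b c d : ℕ) (p : ℤ) : Matrix (Fin (a + d)) (Fin (a + d)) ℚ :=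
  Matrix.of fun i j =>
    if (i : ℕ) < a then
      if (j : ℕ) < a then
        ibinom ((b : ℤ) + c) ((c : ℤ) - (((i : ℕ) : ℤ) + 1) + (((j : ℕ) : ℤ) + 1))
      else
        ibinom (2 * (((j : ℕ) : ℤ) - a + 1) - 1)
          ((((j : ℕ) : ℤ) - a + 1) - (((i : ℕ) : ℤ) + 1) + p)
    else
      if (j : ℕ) < a then
        ibinom ((b : ℤ) + c - 2 * (((i : ℕ) : ℤ) - a + 1) + 1)
          ((c : ℤ) - (((i : ℕ) : ℤ) - a + 1) + (((j : ℕ) : ℤ) + 1) - p)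
      else
        ibinom (2 * (((j : ℕ) : ℤ) - ((i : ℕ) : ℤ))) (((j : ℕ) : ℤ) - ((i : ℕ) : ℤ))

/-- `E(a,b,c,d,p) = det Q(a,b,c,d,p)`, the signed count of lozenge tilings of the
`(a,b,c)`-hexagon with an even intrusion of length `d` at position `p`. -/
def E (a b c d : ℕ) (p : ℤ) : ℚ := (Qmat a b c d p).det

/-! ### Auxiliary lemmas on `ibinom` -/

lemma ibinom_neg {n k : ℤ} (h : k < 0) : ibinom n k = 0 := by
  simp [ibinom, not_le.mpr h]

lemma ibinom_gt {n k : ℤ} (h : n < k) : ibinom n k = 0 := by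
  simp only [ibinom, ite_eq_right_iff]
  rintro ⟨-, h2⟩; omega

lemma ibinom_natCast (n k : ℕ) : ibinom (n : ℤ) (k : ℤ) = (n.choose k : ℚ) := by
  unfold ibinom
  split_ifs with h
  · simp
  · push_neg at h
    have hk : (n : ℤ) < k := h (by positivity)
    rw [Nat.choose_eq_zero_of_lt (by exact_mod_cast hk)]
    simp

lemma ibinom_natSub (m n i : ℕ) :
    ibinom (m : ℤ) ((n : ℤ) - (i : ℤ)) = if i ≤ n then (m.choose (n - i) : ℚ) else 0 := by
  split_ifs with h
  · rw [show (n : ℤ) - (i : ℤ) = ((n - i : ℕ) : ℤ) by omega, ibinom_natCast]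
  · exact ibinom_neg (by omega)

lemma ibinom_zero_zero : ibinom 0 0 = 1 := by simp [ibinom]

/-! ### The Vandermonde convolution in `ℕ` -/

lemma nat_vander (k m n a : ℕ) (hk : k < a) :
    ∑ i ∈ Finset.range a, k.choose i * (if i ≤ n then m.choose (n - i) else 0)
      = (k + m).choose n := by
  rw [Nat.add_choose_eq, Finset.Nat.sum_antidiagonal_eq_sum_range_succ_mk]
  set f : ℕ → ℕ := fun i => k.choose i * (if i ≤ n then m.choose (n - i) else 0) with hf
  have h1 : ∑ i ∈ Finset.range a, f i = ∑ i ∈ Finset.range (max a (n+1)), f i := by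
    apply Finset.sum_subset (Finset.range_subset_range.mpr (le_max_left _ _))
    intro x hx hnx
    simp only [Finset.mem_range, not_lt] at hnx
    have : k < x := lt_of_lt_of_le hk hnx
    simp [hf, Nat.choose_eq_zero_of_lt this]
  have h2 : ∑ i ∈ Finset.range (n+1), (k.choose i * m.choose (n - i))
      = ∑ i ∈ Finset.range (max a (n+1)), f i := by
    apply Finset.sum_subset_zero_on_sdiff (Finset.range_subset_range.mpr (le_max_right _ _))
    · intro x hx
      simp only [Finset.mem_sdiff, Finset.mem_range, not_lt] at hx
      have : ¬ x ≤ n := by omega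
      simp [hf, this]
    · intro x hx
      simp only [Finset.mem_range] at hx
      have : x ≤ n := by omega
      simp [hf, this]
  rw [h1, ← h2]

/-! ### The entry factorization of the Pascal-transformed lateral matrix -/

open Nat in
lemma G_entry (b c k j : ℕ) :
    (((b + c + k).choose (c + j)) : ℚ)
      = (((b + c + k)! : ℚ) / ((b + k)! : ℚ))
        * ((∏ t ∈ Finset.range j, ((k : ℚ) + b - t)) * (1 / ((c + j)! : ℚ))) := by
  by_cases hj : j ≤ b + k
  · have hprod : (∏ t ∈ Finset.range j, ((k : ℚ) + b - t))
        = (((b + k).descFactorial j : ℕ) : ℚ) := by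
      rw [Nat.descFactorial_eq_prod_range, Nat.cast_prod]
      apply Finset.prod_congr rfl
      intro t ht
      simp only [Finset.mem_range] at ht
      have : t ≤ b + k := by omega
      push_cast [this]
      ring
    rw [hprod]
    have h1 : (b + k - j)! * (b + k).descFactorial j = (b + k)! :=
      Nat.factorial_mul_descFactorial hj
    have h2 : (b + c + k).choose (c + j) * (c + j)! * ((b + c + k) - (c + j))!
        = (b + c + k)! := Nat.choose_mul_factorial_mul_factorial (by omega)
    have h3 : (b + c + k) - (c + j) = b + k - j := by omega
    rw [h3] at h2
    have e1 : ((b+k)! : ℚ) ≠ 0 := Nat.cast_ne_zero.mpr (Nat.factorial_ne_zero _)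
    have e2 : ((c+j)! : ℚ) ≠ 0 := Nat.cast_ne_zero.mpr (Nat.factorial_ne_zero _)
    have e3 : ((b+k-j)! : ℚ) ≠ 0 := Nat.cast_ne_zero.mpr (Nat.factorial_ne_zero _)
    field_simp
    have h1' : ((b + k - j)! : ℚ) * ((b + k).descFactorial j : ℚ) = ((b + k)! : ℚ) := by
      exact_mod_cast congrArg (Nat.cast (R := ℚ)) h1
    have h2' : ((b + c + k).choose (c + j) : ℚ) * ((c + j)! : ℚ) * ((b + k - j)! : ℚ)
        = ((b + c + k)! : ℚ) := by exact_mod_cast congrArg (Nat.cast (R := ℚ)) h2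
    calc ((b + c + k).choose (c + j) : ℚ) * ((b+k)! : ℚ) * ((c+j)! : ℚ)
        = ((b + c + k).choose (c + j) : ℚ) * ((c+j)! : ℚ) * ((b+k-j)! : ℚ)
            * ((b + k).descFactorial j : ℚ) := by rw [← h1']; try ring
      _ = ((b+c+k)! : ℚ) * ((b + k).descFactorial j : ℚ) := by rw [← h2']; try ring
  · push_neg at hj
    rw [Nat.choose_eq_zero_of_lt (by omega)]
    rw [Finset.prod_eq_zero (Finset.mem_range.mpr hj) (by push_cast; ring)]
    simp

open Nat in
lemma det_vandermonde_nat (a : ℕ) :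
    (Matrix.vandermonde (fun i : Fin a => ((i : ℕ) : ℚ))).det
      = ((∏ i ∈ Finset.range a, i ! : ℕ) : ℚ) := by
  cases a with
  | zero => simp [Matrix.det_isEmpty]
  | succ n =>
    rw [Matrix.det_vandermonde_id_eq_superFactorial n, Nat.prod_range_succ_factorial]

/-! ### Evaluation of the lateral determinant -/

open Nat Polynomial in
lemma det_lateral (a b c : ℕ) :
    (Matrix.of fun i j : Fin a =>
        ibinom ((b : ℤ) + c) ((c : ℤ) - ((i : ℕ) : ℤ) + ((j : ℕ) : ℤ))).det
      = macmahon a b c := by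
  set B : Matrix (Fin a) (Fin a) ℚ := Matrix.of fun i j : Fin a =>
      ibinom ((b : ℤ) + c) ((c : ℤ) - ((i : ℕ) : ℤ) + ((j : ℕ) : ℤ)) with hB
  set L : Matrix (Fin a) (Fin a) ℚ :=
      Matrix.of (fun k i : Fin a => (((k : ℕ).choose (i : ℕ) : ℕ) : ℚ)) with hL
  set G : Matrix (Fin a) (Fin a) ℚ :=
      Matrix.of (fun k j : Fin a => (((b + c + k).choose (c + j) : ℕ) : ℚ)) with hG
  have hdetL : L.det = 1 := by
    rw [Matrix.det_of_lowerTriangular L ?ht]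
    · apply Finset.prod_eq_one
      intro i _
      simp [hL]
    · intro i j hij
      have : (i : ℕ) < (j : ℕ) := hij
      simp [hL, Nat.choose_eq_zero_of_lt this]
  have hLB : L * B = G := by
    ext k j
    rw [Matrix.mul_apply]
    have hterm : ∀ i : Fin a, L k i * B i j
        = (((k : ℕ).choose (i : ℕ)
            * (if (i : ℕ) ≤ c + (j : ℕ) then (b + c).choose (c + (j : ℕ) - (i : ℕ)) else 0)
            : ℕ) : ℚ) := by
      intro i
      have harg : (c : ℤ) - ((i : ℕ) : ℤ) + ((j : ℕ) : ℤ)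
          = (((c + (j : ℕ) : ℕ)) : ℤ) - ((i : ℕ) : ℤ) := by push_cast; ring
      have : B i j = ibinom (((b + c : ℕ)) : ℤ) ((((c + (j : ℕ) : ℕ)) : ℤ) - ((i : ℕ) : ℤ)) := by
        rw [hB]
        simp only [Matrix.of_apply]
        rw [← harg]
        norm_cast
      rw [this, ibinom_natSub, hL]
      push_cast
      split_ifs <;> simp
    simp_rw [hterm]
    rw [← Nat.cast_sum]
    rw [Fin.sum_univ_eq_sum_range (fun i => (k : ℕ).choose i
        * (if i ≤ c + (j : ℕ) then (b + c).choose (c + (j : ℕ) - i) else 0))]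
    rw [nat_vander _ _ _ _ k.isLt]
    simp only [hG, Matrix.of_apply]
    congr 2
    omega
  have hdetBG : B.det = G.det := by
    rw [← hLB, Matrix.det_mul, hdetL, one_mul]
  set pp : Fin a → ℚ[X] := fun j => ∏ t ∈ Finset.range (j : ℕ), (X + C ((b : ℚ) - t)) with hpp
  set V : Matrix (Fin a) (Fin a) ℚ :=
      Matrix.of (fun k j : Fin a => (pp j).eval ((k : ℕ) : ℚ)) with hV
  set r : Fin a → ℚ := fun k => ((b + c + (k : ℕ))! : ℚ) / ((b + (k : ℕ))! : ℚ) with hr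
  set s : Fin a → ℚ := fun j => 1 / ((c + (j : ℕ))! : ℚ) with hs
  have hGfac : G = Matrix.diagonal r * (V * Matrix.diagonal s) := by
    ext k j
    rw [Matrix.diagonal_mul, Matrix.mul_diagonal]
    have heval : (pp j).eval ((k : ℕ) : ℚ)
        = ∏ t ∈ Finset.range (j : ℕ), (((k : ℕ) : ℚ) + b - t) := by
      rw [hpp]
      simp only [eval_prod, eval_add, eval_X, eval_C]
      apply Finset.prod_congr rfl
      intro t _
      ring
    simp only [hG, hV, Matrix.of_apply, hr, hs]
    rw [heval, G_entry]
  have hmon : ∀ j : Fin a, (pp j).Monic := fun j =>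
    monic_prod_of_monic _ _ (fun t _ => monic_X_add_C _)
  have hdeg : ∀ j : Fin a, (pp j).natDegree = (j : ℕ) := by
    intro j
    have hppj : pp j = ∏ t ∈ Finset.range (j : ℕ), (X + C ((b : ℚ) - t)) := rfl
    rw [hppj, Polynomial.natDegree_prod_of_monic (Finset.range (j : ℕ))
      (fun t : ℕ => X + C ((b : ℚ) - (t : ℚ))) (fun t _ => monic_X_add_C ((b : ℚ) - (t : ℚ)))]
    have h : ∀ x ∈ Finset.range (j : ℕ), (X + (C ((b : ℚ) - (x : ℚ)))).natDegree = 1 :=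
      fun x _ => Polynomial.natDegree_X_add_C _
    rw [Finset.sum_congr rfl h]
    simp
  have hdetV : V.det = ((∏ i ∈ Finset.range a, i ! : ℕ) : ℚ) := by
    rw [← det_vandermonde_nat a]
    exact (Matrix.det_eval_matrixOfPolynomials_eq_det_vandermonde
      (fun i : Fin a => ((i : ℕ) : ℚ)) pp hdeg hmon).symm
  have hfin := hdetBG
  rw [hGfac, Matrix.det_mul, Matrix.det_mul, Matrix.det_diagonal, Matrix.det_diagonal,
    hdetV] at hfin
  rw [hfin, macmahon]
  rw [Fin.prod_univ_eq_prod_range (fun k => ((b + c + k)! : ℚ) / ((b + k)! : ℚ))]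
  rw [Fin.prod_univ_eq_prod_range (fun j => 1 / ((c + j)! : ℚ))]
  rw [Nat.cast_prod, ← Finset.prod_mul_distrib, ← Finset.prod_mul_distrib]
  apply Finset.prod_congr rfl
  intro i _
  have e1 : ((b + i)! : ℚ) ≠ 0 := Nat.cast_ne_zero.mpr (Nat.factorial_ne_zero _)
  have e2 : ((c + i)! : ℚ) ≠ 0 := Nat.cast_ne_zero.mpr (Nat.factorial_ne_zero _)
  field_simp

/-! ### Entry lemmas for `Qmat` -/

lemma Qmat_intrusive {a b c d : ℕ} {p : ℤ} {i j : Fin (a + d)}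
    (hi : a ≤ (i : ℕ)) (hj : a ≤ (j : ℕ)) :
    Qmat a b c d p i j
      = ibinom (2 * (((j : ℕ) : ℤ) - ((i : ℕ) : ℤ))) (((j : ℕ) : ℤ) - ((i : ℕ) : ℤ)) := by
  simp [Qmat, not_lt.mpr hi, not_lt.mpr hj]

lemma Qmat_intrusive_lt {a b c d : ℕ} {p : ℤ} {i j : Fin (a + d)}
    (hi : a ≤ (i : ℕ)) (hj : a ≤ (j : ℕ)) (hij : (j : ℕ) < (i : ℕ)) :
    Qmat a b c d p i j = 0 := by
  rw [Qmat_intrusive hi hj]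
  exact ibinom_neg (by omega)

lemma Qmat_intrusive_diag {a b c d : ℕ} {p : ℤ} {i : Fin (a + d)} (hi : a ≤ (i : ℕ)) :
    Qmat a b c d p i i = 1 := by
  rw [Qmat_intrusive hi hi, sub_self, mul_zero, ibinom_zero_zero]

/-- Determinant of an intrusive principal block is `1`. -/
lemma det_intrusive_block {a b c d : ℕ} {p : ℤ} (P : Fin (a + d) → Prop)
    [DecidablePred P] (hP : ∀ i, P i → a ≤ (i : ℕ)) :
    ((Qmat a b c d p).toSquareBlockProp P).det = 1 := by
  rw [Matrix.det_of_upperTriangular ?ht]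
  · apply Finset.prod_eq_one
    intro x _
    exact Qmat_intrusive_diag (hP _ x.2)
  · intro x y hxy
    have : (y.1 : ℕ) < (x.1 : ℕ) := hxy
    exact Qmat_intrusive_lt (hP _ x.2) (hP _ y.2) this

/-! ### The block-triangular reduction -/

lemma det_Q_eq_lateral (a b c d : ℕ) (p : ℤ) (J : ℕ)
    (htr : ∀ i j : Fin (a + d), (i : ℕ) < a → a ≤ (j : ℕ) → (j : ℕ) < a + J →
      Qmat a b c d p i j = 0)
    (hbl : ∀ i j : Fin (a + d), a + J ≤ (i : ℕ) → (j : ℕ) < a →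
      Qmat a b c d p i j = 0) :
    E a b c d p = macmahon a b c := by
  classical
  rw [E]
  set M := Qmat a b c d p with hM
  -- split off the I2 block (indices ≥ a + J)
  rw [Matrix.twoBlockTriangular_det' M (fun i => a + J ≤ (i : ℕ)) ?h2]
  case h2 =>
    intro i hi j hj
    push_neg at hj
    by_cases hja : (j : ℕ) < a
    · exact hbl i j hi hja
    · exact Qmat_intrusive_lt (by omega) (by omega) (by omega)
  rw [det_intrusive_block _ (fun i hi => by omega), one_mul]
  -- now split the rest into I1 (intrusive, index < a + J) and lateral
  set M2 := M.toSquareBlockProp (fun i => ¬ a + J ≤ (i : ℕ)) with hM2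
  rw [Matrix.twoBlockTriangular_det M2 (fun x => a ≤ ((x : Fin (a + d)) : ℕ)) ?h1]
  case h1 =>
    intro x hx y hy
    have hx' : ((x : Fin (a + d)) : ℕ) < a := by omega
    have hy2 : ((y : Fin (a + d)) : ℕ) < a + J := by
      have := y.2; omega
    exact htr _ _ hx' hy (by omega)
  -- the I1 block has determinant 1
  have hI1 : (M2.toSquareBlockProp (fun x => a ≤ ((x : Fin (a + d)) : ℕ))).det = 1 := by
    rw [Matrix.det_of_upperTriangular ?ht]
    · apply Finset.prod_eq_one
      intro x _
      exact Qmat_intrusive_diag x.2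
    · intro x y hxy
      have : ((y.1 : Fin (a + d)) : ℕ) < ((x.1 : Fin (a + d)) : ℕ) := hxy
      exact Qmat_intrusive_lt x.2 y.2 this
  rw [hI1, one_mul]
  -- the lateral block
  set S := {x : {i : Fin (a + d) // ¬ a + J ≤ (i : ℕ)} // ¬ a ≤ ((x : Fin (a + d)) : ℕ)}
  have hlat : ∀ x : S, ((x : Fin (a + d)) : ℕ) < a := fun x => by
    have := x.2; omega
  rcases Nat.eq_zero_or_pos a with ha | ha
  · -- a = 0 : the block is empty
    have : IsEmpty S := ⟨fun x => by have := hlat x; omega⟩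
    rw [Matrix.det_isEmpty]
    subst ha
    simp [macmahon]
  · set e : Fin a ≃ S :=
      { toFun := fun k => ⟨⟨⟨(k : ℕ), by have hk := k.isLt; omega⟩,
          by show ¬ a + J ≤ (k : ℕ); have hk := k.isLt; omega⟩,
          by show ¬ a ≤ (k : ℕ); have hk := k.isLt; omega⟩
        invFun := fun x => ⟨((x : Fin (a + d)) : ℕ), hlat x⟩
        left_inv := fun k => rfl
        right_inv := fun x => rfl } with he
    rw [← Matrix.det_submatrix_equiv_self e]
    rw [← det_lateral a b c]
    congr 1
    ext k l
    have hk : ((e k : Fin (a+d)) : ℕ) = (k : ℕ) := rfl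
    have hl : ((e l : Fin (a+d)) : ℕ) = (l : ℕ) := rfl
    have hka : ((e k : Fin (a+d)) : ℕ) < a := by rw [hk]; exact k.isLt
    have hla : ((e l : Fin (a+d)) : ℕ) < a := by rw [hl]; exact l.isLt
    show M (e k : Fin (a+d)) (e l : Fin (a+d)) = _
    rw [hM]
    simp only [Qmat, Matrix.of_apply]
    rw [if_pos hka, if_pos hla]
    show ibinom _ _ = ibinom ((b : ℤ) + c) ((c : ℤ) - ((k : ℕ) : ℤ) + ((l : ℕ) : ℤ))
    congr 1
    have hk2 : ((((e k : Fin (a+d)) : ℕ)) : ℤ) = ((k : ℕ) : ℤ) := by rw [hk]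
    have hl2 : ((((e l : Fin (a+d)) : ℕ)) : ℤ) = ((l : ℕ) : ℤ) := by rw [hl]
    rw [hk2, hl2]
    ring

/-- Intrusions positioned too far away from the hexagon do not change the number of
lozenge tilings. -/
theorem E_eq_macmahon_of_far (a b c d : ℕ) (p : ℤ)
    (h : p ≤ max (-(d : ℤ)) (-(((b + 1) / 2 : ℕ) : ℤ)) ∨
         min ((a : ℤ) + d) ((a : ℤ) + (((c + 1) / 2 : ℕ) : ℤ)) ≤ p) :
    E a b c d p = macmahon a b c := by
  rcases h with h | h
  · -- left case
    rcases le_max_iff.mp h with hp | hp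
    all_goals {
      refine det_Q_eq_lateral a b c d p (min d (-p).toNat) ?_ ?_
      · intro i j hi hja hj
        rw [Qmat]
        simp only [Matrix.of_apply, if_pos hi, if_neg (not_lt.mpr hja)]
        apply ibinom_neg
        omega
      · intro i j hi hja
        have hid : (i : ℕ) < a + d := i.isLt
        rw [Qmat]
        simp only [Matrix.of_apply, if_neg (by omega : ¬ (i : ℕ) < a), if_pos hja]
        apply ibinom_gt
        have hb2 : 2 * ((b + 1) / 2) + 1 ≥ b + 1 := by omega
        omega
    }
  · -- right case
    rcases min_le_iff.mp h with hp | hp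
    all_goals {
      refine det_Q_eq_lateral a b c d p (min d (p - (a : ℤ)).toNat) ?_ ?_
      · intro i j hi hja hj
        rw [Qmat]
        simp only [Matrix.of_apply, if_pos hi, if_neg (not_lt.mpr hja)]
        apply ibinom_gt
        omega
      · intro i j hi hja
        have hid : (i : ℕ) < a + d := i.isLt
        rw [Qmat]
        simp only [Matrix.of_apply, if_neg (by omega : ¬ (i : ℕ) < a), if_pos hja]
        apply ibinom_neg
        have hc2 : 2 * ((c + 1) / 2) + 1 ≥ c + 1 := by omega
        omega
    }
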